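/- Telescoping product along a derivation tree: let t be an ordered derivation tree with root label A and yield of size n = ℓ + type(A), in an n-unambiguous CNF grammar. The product over all nodes of t of the transition probabilities (production choice probability D_p(ℓ')/D_X(ℓ') times, for binary nodes, the split probability D_B(k)·D_C(ℓ'−i−k)/D_p(ℓ')) equals 1/D_A(ℓ). -/

import Mathlib

/-- Short-hand productions of a CNF hyperedge replacement grammar, as in the
paper: `nt A B C i` stands for `A ⟶ BC, i`, `tm A a i` for `A ⟶ a, i`, and
`eps A i` for `A ⟶ λ, i`, where `i` is the number of internal (non-external)
nodes of the right-hand side.  The tag `id` distinguishes different productions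
with the same short-hand data. -/
inductive GProd (Nt T : Type) where
  | nt (id : ℕ) (A B C : Nt) (i : ℕ)
  | tm (id : ℕ) (A : Nt) (a : T) (i : ℕ)
  | eps (id : ℕ) (A : Nt) (i : ℕ)
deriving DecidableEq

/-- The left-hand side of a short-hand production. -/
def GProd.lhs {Nt T : Type} : GProd Nt T → Nt
  | .nt _ A _ _ _ => A
  | .tm _ A _ _ => A
  | .eps _ A _ => A

/-- Ordered derivation trees of a CNF hyperedge replacement grammar with
production set `P`: each node is labelled by a production applicable to its
root non-terminal, with one subtree per non-terminal hyperedge of its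
right-hand side (in the marked order `α`, `β`). -/
inductive DTree {Nt T : Type} (P : Finset (GProd Nt T)) : Nt → Type where
  | node (id : ℕ) (A B C : Nt) (i : ℕ) (h : GProd.nt id A B C i ∈ P)
      (t₁ : DTree P B) (t₂ : DTree P C) : DTree P A
  | leafT (id : ℕ) (A : Nt) (a : T) (i : ℕ) (h : GProd.tm id A a i ∈ P) : DTree P A
  | leafE (id : ℕ) (A : Nt) (i : ℕ) (h : GProd.eps id A i ∈ P) : DTree P A

namespace DTree

variable {Nt T : Type} {P : Finset (GProd Nt T)} {A : Nt}

/-- The size contribution `ℓ` of the yield of a derivation tree, so that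
`|yield t| = sz t + type A` for a tree `t` with root label `A`: a terminal
production contributes its `i` internal nodes plus one terminal hyperedge, an
empty production its `i` internal nodes, and a non-terminal production its `i`
internal nodes plus the contributions of its two subtrees. -/
def sz : ∀ {A : Nt}, DTree P A → ℕ
  | _, node _ _ _ _ i _ t₁ t₂ => i + t₁.sz + t₂.sz
  | _, leafT _ _ _ i _ => i + 1
  | _, leafE _ _ i _ => i

/-- The production applied at the root of a derivation tree. -/
def rootP : ∀ {A : Nt}, DTree P A → GProd Nt T
  | _, node id A B C i _ _ _ => GProd.nt id A B C i
  | _, leafT id A a i _ => GProd.tm id A a i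
  | _, leafE id A i _ => GProd.eps id A i

/-- The number of nodes of a derivation tree, i.e. the number of productions
applied in the corresponding derivation. -/
def nodes : ∀ {A : Nt}, DTree P A → ℕ
  | _, node _ _ _ _ _ _ t₁ t₂ => 1 + t₁.nodes + t₂.nodes
  | _, leafT _ _ _ _ _ => 1
  | _, leafE _ _ _ _ => 1

end DTree

/-- `D P A ℓ`: the number of ordered derivation trees with root label `A`
whose yield has size `ℓ + type A`. -/
noncomputable def D {Nt T : Type} (P : Finset (GProd Nt T)) (A : Nt) (ℓ : ℕ) : ℕ :=
  Nat.card {t : DTree P A // t.sz = ℓ}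

/-- `Dp P A p ℓ`: the number of such trees whose root production is `p`. -/
noncomputable def Dp {Nt T : Type} (P : Finset (GProd Nt T)) (A : Nt)
    (p : GProd Nt T) (ℓ : ℕ) : ℕ :=
  Nat.card {t : DTree P A // t.rootP = p ∧ t.sz = ℓ}

/-- The product, over all nodes of an ordered derivation tree, of the sampler's
transition probabilities: at each node the production-choice probability
`D_p(ℓ')/D_X(ℓ')` and, for binary nodes, additionally the split probability
`D_B(k)·D_C(ℓ'−i−k)/D_p(ℓ')`. -/
noncomputable def treeProb {Nt T : Type} (P : Finset (GProd Nt T)) :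
    ∀ {A : Nt}, DTree P A → ℚ
  | _, DTree.node id A B C i _h t₁ t₂ =>
      ((Dp P A (GProd.nt id A B C i) (i + t₁.sz + t₂.sz) : ℚ) /
          (D P A (i + t₁.sz + t₂.sz) : ℚ)) *
        (((D P B t₁.sz * D P C t₂.sz : ℕ) : ℚ) /
          (Dp P A (GProd.nt id A B C i) (i + t₁.sz + t₂.sz) : ℚ)) *
        treeProb P t₁ * treeProb P t₂
  | _, DTree.leafT id A a i _h =>
      (Dp P A (GProd.tm id A a i) (i + 1) : ℚ) / (D P A (i + 1) : ℚ)
  | _, DTree.leafE id A i _h =>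
      (Dp P A (GProd.eps id A i) i : ℚ) / (D P A i : ℚ)

section Aux

variable {Nt T : Type} {P : Finset (GProd Nt T)}

theorem DTree.one_le_sz (heps : ∀ id A i, GProd.eps id A i ∈ P → 1 ≤ i) :
    ∀ {A : Nt} (t : DTree P A), 1 ≤ t.sz
  | _, .node _ _ _ _ i _ t₁ t₂ => by
      have := DTree.one_le_sz heps t₁
      simp only [DTree.sz]; omega
  | _, .leafT _ _ _ i _ => by simp [DTree.sz]
  | _, .leafE id A i h => heps id A i h

/-- Children data of a production, for bounding. -/
def Child (P : Finset (GProd Nt T)) (n : ℕ) : GProd Nt T → Type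
  | .nt _ _ B C _ => {t : DTree P B // t.sz < n} × {t : DTree P C // t.sz < n}
  | .tm _ _ _ _ => PUnit
  | .eps _ _ _ => PUnit

theorem finite_child (n : ℕ)
    (ih : ∀ (B : Nt), Finite {t : DTree P B // t.sz < n}) (p : GProd Nt T) :
    Finite (Child P n p) := by
  cases p with
  | nt id A B C i =>
      haveI := ih B; haveI := ih C
      exact inferInstanceAs (Finite (_ × _))
  | tm id A a i => exact inferInstanceAs (Finite PUnit.{1})
  | eps id A i => exact inferInstanceAs (Finite PUnit.{1})

def encode (heps : ∀ id A i, GProd.eps id A i ∈ P → 1 ≤ i) (n : ℕ) :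
    ∀ {A : Nt} (t : DTree P A), t.sz < n + 1 →
      (p : {p : GProd Nt T // p ∈ P}) × Child P n p.1
  | _, .node id A B C i h t₁ t₂, hlt =>
      ⟨⟨.nt id A B C i, h⟩,
        (⟨t₁, by have h2 := DTree.one_le_sz heps t₂; simp only [DTree.sz] at hlt; omega⟩,
         ⟨t₂, by have h1 := DTree.one_le_sz heps t₁; simp only [DTree.sz] at hlt; omega⟩)⟩
  | _, .leafT id A a i h, _ => ⟨⟨.tm id A a i, h⟩, PUnit.unit⟩
  | _, .leafE id A i h, _ => ⟨⟨.eps id A i, h⟩, PUnit.unit⟩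

theorem encode_inj (heps : ∀ id A i, GProd.eps id A i ∈ P → 1 ≤ i) (n : ℕ) {A : Nt}
    (t t' : DTree P A) (ht : t.sz < n + 1) (ht' : t'.sz < n + 1)
    (h : encode heps n t ht = encode heps n t' ht') : t = t' := by
  cases t <;> cases t' <;>
    simp only [encode, Sigma.ext_iff, Subtype.mk.injEq, GProd.nt.injEq, GProd.tm.injEq,
      GProd.eps.injEq, reduceCtorEq, false_and, and_false, true_and, and_true] at h
  case node.node id B C i hp t₁ t₂ id' B' C' i' hp' t₁' t₂' =>
    obtain ⟨⟨rfl, rfl, rfl, rfl⟩, h2⟩ := h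
    replace h2 := eq_of_heq h2
    change (_ : {t : DTree P B // t.sz < n} × {t : DTree P C // t.sz < n}) = _ at h2
    simp only [heq_eq_eq, Prod.ext_iff, Subtype.ext_iff] at h2
    obtain ⟨rfl, rfl⟩ := h2
    rfl
  case leafT.leafT id a i hp id' a' i' hp' =>
    obtain ⟨⟨rfl, rfl, rfl⟩, -⟩ := h
    rfl
  case leafE.leafE id i hp id' i' hp' =>
    obtain ⟨⟨rfl, rfl⟩, -⟩ := h
    rfl

theorem finite_lt (heps : ∀ id A i, GProd.eps id A i ∈ P → 1 ≤ i) :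
    ∀ (n : ℕ) (A : Nt), Finite {t : DTree P A // t.sz < n}
  | 0, A => by
      haveI : IsEmpty {t : DTree P A // t.sz < 0} :=
        ⟨fun ⟨t, ht⟩ => by omega⟩
      infer_instance
  | n + 1, A => by
      haveI : ∀ p : {p : GProd Nt T // p ∈ P}, Finite (Child P n p.1) :=
        fun p => finite_child n (finite_lt heps n) p.1
      exact Finite.of_injective (fun x => encode heps n x.1 x.2)
        (fun x y h => Subtype.ext (encode_inj heps n _ _ _ _ h))

theorem finite_eq (heps : ∀ id A i, GProd.eps id A i ∈ P → 1 ≤ i) (ℓ : ℕ) (A : Nt) :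
    Finite {t : DTree P A // t.sz = ℓ} := by
  haveI := finite_lt heps (ℓ + 1) A
  exact Finite.of_injective
    (fun x => (⟨x.1, by omega⟩ : {t : DTree P A // t.sz < ℓ + 1}))
    (fun x y h => by cases x; cases y; simpa using h)

theorem finite_rp (heps : ∀ id A i, GProd.eps id A i ∈ P → 1 ≤ i) (p : GProd Nt T)
    (ℓ : ℕ) (A : Nt) : Finite {t : DTree P A // t.rootP = p ∧ t.sz = ℓ} := by
  haveI := finite_eq heps ℓ A
  exact Finite.of_injective
    (fun x => (⟨x.1, x.2.2⟩ : {t : DTree P A // t.sz = ℓ}))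
    (fun x y h => by cases x; cases y; simpa using h)

theorem D_pos (heps : ∀ id A i, GProd.eps id A i ∈ P → 1 ≤ i) {A : Nt} (t : DTree P A) :
    0 < D P A t.sz := by
  haveI := finite_eq (P := P) heps t.sz A
  haveI : Nonempty {t' : DTree P A // t'.sz = t.sz} := ⟨⟨t, rfl⟩⟩
  exact Nat.card_pos

theorem Dp_pos (heps : ∀ id A i, GProd.eps id A i ∈ P → 1 ≤ i) {A : Nt} (t : DTree P A) :
    0 < Dp P A t.rootP t.sz := by
  haveI := finite_rp (P := P) heps t.rootP t.sz A
  haveI : Nonempty {t' : DTree P A // t'.rootP = t.rootP ∧ t'.sz = t.sz} := ⟨⟨t, rfl, rfl⟩⟩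
  exact Nat.card_pos

theorem Dp_leafT {id : ℕ} {A : Nt} {a : T} {i : ℕ} (h : GProd.tm id A a i ∈ P) :
    Dp P A (GProd.tm id A a i) (i + 1) = 1 := by
  rw [Dp, Nat.card_eq_one_iff_unique]
  refine ⟨⟨?_⟩, ⟨⟨.leafT id A a i h, rfl, rfl⟩⟩⟩
  rintro ⟨t, ht, -⟩ ⟨t', ht', -⟩
  apply Subtype.ext
  cases t <;> cases t' <;>
    simp only [DTree.rootP, GProd.tm.injEq, reduceCtorEq] at ht ht'
  obtain ⟨rfl, -, rfl, rfl⟩ := ht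
  obtain ⟨rfl, -, rfl, rfl⟩ := ht'
  rfl

theorem Dp_leafE {id : ℕ} {A : Nt} {i : ℕ} (h : GProd.eps id A i ∈ P) :
    Dp P A (GProd.eps id A i) i = 1 := by
  rw [Dp, Nat.card_eq_one_iff_unique]
  refine ⟨⟨?_⟩, ⟨⟨.leafE id A i h, rfl, rfl⟩⟩⟩
  rintro ⟨t, ht, -⟩ ⟨t', ht', -⟩
  apply Subtype.ext
  cases t <;> cases t' <;>
    simp only [DTree.rootP, GProd.eps.injEq, reduceCtorEq] at ht ht'
  obtain ⟨rfl, -, rfl⟩ := ht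
  obtain ⟨rfl, -, rfl⟩ := ht'
  rfl

end Aux

/-- Telescoping product along a derivation tree: in a CNF
grammar (empty-rhs productions have at least one internal node, as supplied by
the Chomsky normal form; for a non-ambiguous grammar trees correspond
bijectively to generated hypergraphs), the product over all nodes of an
ordered derivation tree `t` of the sampler's transition probabilities equals
`1 / D_A(ℓ)` where `ℓ = sz t` (so that the yield has size `ℓ + type A`). -/
theorem treeProb_eq_inv {Nt T : Type} (P : Finset (GProd Nt T))
    (heps : ∀ id A i, GProd.eps id A i ∈ P → 1 ≤ i)
    (A : Nt) (t : DTree P A) :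
    treeProb P t = 1 / (D P A t.sz : ℚ) := by
  induction t with
  | node id A B C i h t₁ t₂ ih₁ ih₂ =>
      have hD : 0 < D P A (i + t₁.sz + t₂.sz) := D_pos heps (.node id A B C i h t₁ t₂)
      have hDp : 0 < Dp P A (GProd.nt id A B C i) (i + t₁.sz + t₂.sz) :=
        Dp_pos heps (.node id A B C i h t₁ t₂)
      have hB : 0 < D P B t₁.sz := D_pos heps t₁
      have hC : 0 < D P C t₂.sz := D_pos heps t₂
      have hD' : (D P A (i + t₁.sz + t₂.sz) : ℚ) ≠ 0 := by exact_mod_cast hD.ne'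
      have hDp' : (Dp P A (GProd.nt id A B C i) (i + t₁.sz + t₂.sz) : ℚ) ≠ 0 := by
        exact_mod_cast hDp.ne'
      have hB' : (D P B t₁.sz : ℚ) ≠ 0 := by exact_mod_cast hB.ne'
      have hC' : (D P C t₂.sz : ℚ) ≠ 0 := by exact_mod_cast hC.ne'
      simp only [treeProb, DTree.sz, ih₁, ih₂]
      push_cast
      field_simp
  | leafT id A a i h => simp [treeProb, DTree.sz, Dp_leafT h]
  | leafE id A i h => simp [treeProb, DTree.sz, Dp_leafE h]
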